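/- arXiv:1909.04602 — 2 statements merged into one kernel-verified Lean document; each statement's English description precedes it below -/
import Mathlib

section
/- Let 𝒫̃ := {P a probability measure on (Ω, ℱ) : P ≪ P' for some P' ∈ 𝒫 and ∫ |X| dP < ∞}. Then 𝒫̃ and 𝒫 have the same polar sets, and inf{x ∈ ℝ : X ≤ x 𝒫-q.s.} = sup_{P ∈ 𝒫̃} ∫ X dP, the equality holding in ℝ ∪ {+∞} with the convention inf ∅ := +∞. -/
open MeasureTheory Filter Topology

namespace Paper

variable {Ω : Type*} [MeasurableSpace Ω]

/-- `N` is a `Ps`-polar set: it is contained in a measurable set which is null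
for every measure in `Ps`. -/
def Polar (Ps : Set (Measure Ω)) (N : Set Ω) : Prop :=
  ∃ N' : Set Ω, MeasurableSet N' ∧ N ⊆ N' ∧ ∀ P ∈ Ps, P N' = 0

/-- `X ≤ Y` holds `Ps`-quasi surely. -/
def LeQS (Ps : Set (Measure Ω)) (X Y : Ω → ℝ) : Prop :=
  Polar Ps {ω | ¬ X ω ≤ Y ω}

/-- `X = Y` holds `Ps`-quasi surely. -/
def EqQS (Ps : Set (Measure Ω)) (X Y : Ω → ℝ) : Prop :=
  Polar Ps {ω | X ω ≠ Y ω}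

/-- The set of quasi-sure bounds of `X` relative to the weight `W`:
all `m ≥ 0` such that `|X| ≤ m • W` quasi surely. -/
def Bounds (Ps : Set (Measure Ω)) (W X : Ω → ℝ) : Set ℝ :=
  {m | 0 ≤ m ∧ Polar Ps {ω | m * W ω < |X ω|}}

/-- Membership in the space `L^W`. -/
def MemLW (Ps : Set (Measure Ω)) (W X : Ω → ℝ) : Prop :=
  Measurable X ∧ (Bounds Ps W X).Nonempty

/-- The norm `‖X‖_W` (for `W = 1` this is the quasi-sure sup-norm `‖·‖_{Ps,∞}`). -/
noncomputable def normW (Ps : Set (Measure Ω)) (W X : Ω → ℝ) : ℝ :=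
  sInf (Bounds Ps W X)

/-- `Kc` is a convex cone of measurable functions containing `0`. -/
def IsConvexCone (Kc : Set (Ω → ℝ)) : Prop :=
  (∀ k ∈ Kc, Measurable k) ∧ (fun _ => (0 : ℝ)) ∈ Kc ∧
  (∀ k ∈ Kc, ∀ c : ℝ, 0 ≤ c → (fun ω => c * k ω) ∈ Kc) ∧
  (∀ k₁ ∈ Kc, ∀ k₂ ∈ Kc, (fun ω => k₁ ω + k₂ ω) ∈ Kc)

/-- `Kc_λ`: the elements of `Kc` bounded below by `-λ • W` quasi surely. -/
def Klam (Ps : Set (Measure Ω)) (W : Ω → ℝ) (Kc : Set (Ω → ℝ)) (l : ℝ) : Set (Ω → ℝ) :=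
  {k ∈ Kc | LeQS Ps (fun ω => -l * W ω) k}

/-- The cone `𝒞` of claims super-replicable at zero cost. -/
def coneC (Ps : Set (Measure Ω)) (W : Ω → ℝ) (Kc : Set (Ω → ℝ)) : Set (Ω → ℝ) :=
  {X | MemLW Ps W X ∧ ∃ k ∈ Kc, LeQS Ps X k}

/-- The set `𝒞_λ`. -/
def coneCLam (Ps : Set (Measure Ω)) (W : Ω → ℝ) (Kc : Set (Ω → ℝ)) (l : ℝ) : Set (Ω → ℝ) :=
  {X | MemLW Ps W X ∧ ∃ k ∈ Klam Ps W Kc l, LeQS Ps X k}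

/-- The sensitive cone `𝒞̃`. -/
def coneCTilde (Ps : Set (Measure Ω)) (W : Ω → ℝ) (Kc : Set (Ω → ℝ)) : Set (Ω → ℝ) :=
  {X | MemLW Ps W X ∧ ∀ P ∈ Ps, ∃ k ∈ Kc, ∀ᵐ ω ∂P, X ω ≤ k ω}

/-- The sensitive set `𝒞̃_λ`. -/
def coneCTildeLam (Ps : Set (Measure Ω)) (W : Ω → ℝ) (Kc : Set (Ω → ℝ)) (l : ℝ) :
    Set (Ω → ℝ) :=
  {X | MemLW Ps W X ∧ ∀ P ∈ Ps, ∃ k ∈ Klam Ps W Kc l, ∀ᵐ ω ∂P, X ω ≤ k ω}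

/-- `𝒞̂ = ⋃_{λ ≥ 0} 𝒞̃_λ`. -/
def coneCHat (Ps : Set (Measure Ω)) (W : Ω → ℝ) (Kc : Set (Ω → ℝ)) : Set (Ω → ℝ) :=
  ⋃ l ∈ {r : ℝ | 0 ≤ r}, coneCTildeLam Ps W Kc l

/-- A set `A ⊆ L^W` is Fatou closed: it is stable under quasi-sure limits of
`‖·‖_W`-bounded sequences. -/
def FatouClosed (Ps : Set (Measure Ω)) (W : Ω → ℝ) (A : Set (Ω → ℝ)) : Prop :=
  ∀ X : ℕ → Ω → ℝ, (∀ n, X n ∈ A) → (∃ m : ℝ, ∀ n, m ∈ Bounds Ps W (X n)) →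
    ∀ Y : Ω → ℝ, MemLW Ps W Y →
      Polar Ps {ω | ¬ Tendsto (fun n => X n ω) atTop (nhds (Y ω))} → Y ∈ A

/-- Bounded measurable real-valued function. -/
def BddMeas (X : Ω → ℝ) : Prop := Measurable X ∧ ∃ c : ℝ, ∀ ω, |X ω| ≤ c

/-- sensitive No Free Lunch with Vanishing Risk: any quasi-surely nonnegative
bounded measurable `ξ` which is a `‖·‖_{Ps,∞}`-limit of elements of `𝒞̃ ∩ L^∞`
vanishes quasi surely. -/
def sNFLVR (Ps : Set (Measure Ω)) (W : Ω → ℝ) (Kc : Set (Ω → ℝ)) : Prop :=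
  ∀ ξ : Ω → ℝ, BddMeas ξ → LeQS Ps (fun _ => 0) ξ →
    (∃ X : ℕ → Ω → ℝ,
      (∀ n, X n ∈ coneCTilde Ps W Kc ∧ MemLW Ps (fun _ => 1) (X n)) ∧
      Tendsto (fun n => normW Ps (fun _ => 1) (fun ω => X n ω - ξ ω)) atTop (nhds 0)) →
    EqQS Ps ξ (fun _ => 0)

/-- No Arbitrage for the cone `Kc`. -/
def NA (Ps : Set (Measure Ω)) (Kc : Set (Ω → ℝ)) : Prop :=
  ∀ k ∈ Kc, LeQS Ps (fun _ => 0) k → EqQS Ps k (fun _ => 0)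

/-- `Ps_W`: probability measures dominated by some member of `Ps` and integrating `W`. -/
def PW (Ps : Set (Measure Ω)) (W : Ω → ℝ) : Set (Measure Ω) :=
  {Q | IsProbabilityMeasure Q ∧ (∃ P ∈ Ps, Q ≪ P) ∧ Integrable W Q}

/-- An approximate separating class `(Q_n)_{n ≥ 1}`. -/
def ApproxSep (Ps : Set (Measure Ω)) (W : Ω → ℝ) (Kc : Set (Ω → ℝ))
    (Q : ℕ → Measure Ω) : Prop :=
  (∀ n : ℕ, 1 ≤ n → Q n ∈ PW Ps W) ∧
  (∃ Pbar ∈ Ps, ∀ n : ℕ, 1 ≤ n → Q n ≪ Pbar) ∧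
  (∀ n : ℕ, 1 ≤ n → ∀ X ∈ coneCLam Ps W Kc (n : ℝ), ∫ ω, X ω ∂(Q n) ≤ 1 / (n : ℝ))

/-- `Q_app ≈ Ps` : the approximate separating classes and `Ps` share the same
polar sets. -/
def QappEquivP (Ps : Set (Measure Ω)) (W : Ω → ℝ) (Kc : Set (Ω → ℝ)) : Prop :=
  ∀ A : Set Ω, MeasurableSet A →
    ((∀ Q : ℕ → Measure Ω, ApproxSep Ps W Kc Q → ∀ n : ℕ, 1 ≤ n → Q n A = 0) ↔ Polar Ps A)

/-- The superhedging-type functional `ρ_A`, with values in `EReal` and the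
convention `inf ∅ = +∞`. -/
noncomputable def rho (A : Set (Ω → ℝ)) (X : Ω → ℝ) : EReal :=
  sInf {y : EReal | ∃ x : ℝ, y = (x : EReal) ∧ (fun ω => X ω - x) ∈ A}

end Paper

namespace Paper

open scoped ENNReal NNReal

lemma key_construction {Ω : Type*} [MeasurableSpace Ω]
    (P : Measure Ω) [IsProbabilityMeasure P] (X : Ω → ℝ) (hX : Measurable X)
    (A : Set Ω) (hA : MeasurableSet A) (hPA : P A ≠ 0) :
    ∃ Q : Measure Ω, IsProbabilityMeasure Q ∧ Q ≪ P ∧ Integrable X Q ∧ Q Aᶜ = 0 := by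
  set g : Ω → ℝ≥0∞ := fun ω => A.indicator (fun ω => ENNReal.ofReal ((1 + |X ω|)⁻¹)) ω with hg
  have hgmeas : Measurable g := by
    apply Measurable.indicator _ hA
    exact (measurable_const.add hX.abs).inv.ennreal_ofReal
  have hgle : ∀ ω, g ω ≤ 1 := by
    intro ω
    by_cases hω : ω ∈ A
    · rw [hg]
      simp only [Set.indicator_of_mem hω]
      rw [show (1 : ℝ≥0∞) = ENNReal.ofReal 1 by simp]
      apply ENNReal.ofReal_le_ofReal
      rw [inv_le_one_iff₀]
      right; linarith [abs_nonneg (X ω)]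
    · rw [hg]; simp [Set.indicator_of_notMem hω]
  set Q₀ : Measure Ω := P.withDensity g with hQ₀
  set Z : ℝ≥0∞ := Q₀ Set.univ with hZ
  have hZ_le : Z ≤ 1 := by
    rw [hZ, hQ₀, withDensity_apply _ MeasurableSet.univ]
    calc ∫⁻ ω in Set.univ, g ω ∂P ≤ ∫⁻ _ in Set.univ, 1 ∂P := lintegral_mono hgle
    _ = 1 := by simp
  have hZ_ne_top : Z ≠ ⊤ := (hZ_le.trans_lt (by norm_num)).ne
  have hZ_ne_zero : Z ≠ 0 := by
    intro h0
    rw [hZ, hQ₀, withDensity_apply _ MeasurableSet.univ, Measure.restrict_univ,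
      lintegral_eq_zero_iff hgmeas] at h0
    apply hPA
    refine measure_mono_null (fun ω hω => ?_) h0
    intro hcontra
    simp only [Set.mem_setOf_eq, hg, Pi.zero_apply, Set.indicator_of_mem hω,
      ENNReal.ofReal_eq_zero] at hcontra
    have hpos : 0 < (1 + |X ω|)⁻¹ := by positivity
    linarith
  refine ⟨Z⁻¹ • Q₀, ?_, ?_, ?_, ?_⟩
  · constructor
    rw [Measure.smul_apply, smul_eq_mul, ← hZ, ENNReal.inv_mul_cancel hZ_ne_zero hZ_ne_top]
  · exact Measure.AbsolutelyContinuous.smul_left (withDensity_absolutelyContinuous P g) _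
  · refine ⟨hX.aestronglyMeasurable, ?_⟩
    show (∫⁻ ω, ‖X ω‖₊ ∂(Z⁻¹ • Q₀)) < ⊤
    rw [lintegral_smul_measure]
    have heq : ∫⁻ ω, (‖X ω‖₊ : ℝ≥0∞) ∂Q₀ = ∫⁻ ω, (‖X ω‖₊ : ℝ≥0∞) * g ω ∂P := by
      rw [hQ₀, lintegral_withDensity_eq_lintegral_mul _ hgmeas hX.nnnorm.coe_nnreal_ennreal]
      congr 1; ext ω; exact mul_comm _ _
    rw [heq]
    have hb : ∀ ω, (‖X ω‖₊ : ℝ≥0∞) * g ω ≤ 1 := by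
      intro ω
      by_cases hω : ω ∈ A
      · rw [hg]
        simp only [Set.indicator_of_mem hω]
        rw [← enorm_eq_nnnorm, Real.enorm_eq_ofReal_abs, ← ENNReal.ofReal_mul (abs_nonneg _),
          show (1 : ℝ≥0∞) = ENNReal.ofReal 1 by simp]
        apply ENNReal.ofReal_le_ofReal
        rw [← div_eq_mul_inv, div_le_one (by positivity)]
        linarith [abs_nonneg (X ω)]
      · rw [hg]; simp [Set.indicator_of_notMem hω]
    calc Z⁻¹ * ∫⁻ ω, (‖X ω‖₊ : ℝ≥0∞) * g ω ∂P ≤ Z⁻¹ * ∫⁻ _, 1 ∂P :=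
          mul_le_mul_right (lintegral_mono hb) _
    _ = Z⁻¹ := by simp
    _ < ⊤ := ENNReal.inv_lt_top.mpr (pos_iff_ne_zero.mpr hZ_ne_zero)
  · rw [Measure.smul_apply, hQ₀, withDensity_apply _ hA.compl]
    have h0 : ∫⁻ ω in Aᶜ, g ω ∂P = 0 := by
      rw [← lintegral_zero (μ := P.restrict Aᶜ)]
      apply setLIntegral_congr_fun hA.compl
      intro ω hω
      rw [hg]; exact Set.indicator_of_notMem (by simpa using hω) _
    rw [h0, smul_zero]

/-- **Remark (`rmk:rewrite`).** -/
theorem qs_bound_as_sup {Ω : Type*} [MeasurableSpace Ω]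
    (Ps : Set (Measure Ω)) (hPsne : Ps.Nonempty)
    (hPsprob : ∀ P ∈ Ps, IsProbabilityMeasure P)
    (X : Ω → ℝ) (hX : Measurable X) :
    (∀ N : Set Ω,
      Polar {P : Measure Ω |
        IsProbabilityMeasure P ∧ (∃ P' ∈ Ps, P ≪ P') ∧ Integrable X P} N ↔
      Polar Ps N) ∧
    sInf {y : EReal | ∃ x : ℝ, y = (x : EReal) ∧ LeQS Ps X (fun _ => x)} =
      sSup {y : EReal | ∃ P : Measure Ω,
        (IsProbabilityMeasure P ∧ (∃ P' ∈ Ps, P ≪ P') ∧ Integrable X P) ∧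
        y = ((∫ ω, X ω ∂P : ℝ) : EReal)} := by
  -- an auxiliary fact: any non-`Ps`-polar measurable set carries some `Q` in `𝒫̃`
  -- concentrated on it.
  have hkey : ∀ A : Set Ω, MeasurableSet A → (∃ P ∈ Ps, P A ≠ 0) →
      ∃ Q : Measure Ω,
        (IsProbabilityMeasure Q ∧ (∃ P' ∈ Ps, Q ≪ P') ∧ Integrable X Q) ∧ Q Aᶜ = 0 := by
    intro A hA ⟨P, hP, hPA⟩
    haveI := hPsprob P hP
    obtain ⟨Q, hQprob, hQac, hQint, hQAc⟩ := key_construction P X hX A hA hPA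
    exact ⟨Q, ⟨hQprob, ⟨P, hP, hQac⟩, hQint⟩, hQAc⟩
  constructor
  · -- same polar sets
    intro N
    constructor
    · rintro ⟨N', hN'meas, hsub, hnull⟩
      refine ⟨N', hN'meas, hsub, fun P hP => ?_⟩
      by_contra hPN'
      obtain ⟨Q, hQmem, hQN'c⟩ := hkey N' hN'meas ⟨P, hP, hPN'⟩
      haveI : IsProbabilityMeasure Q := hQmem.1
      have hQN' : Q N' = 0 := hnull Q hQmem
      have h1 : (1 : ℝ≥0∞) ≤ 0 := by
        calc (1 : ℝ≥0∞) = Q Set.univ := (measure_univ (μ := Q)).symm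
        _ ≤ Q N' + Q N'ᶜ := by
            rw [← Set.union_compl_self N']; exact measure_union_le _ _
        _ = 0 := by rw [hQN', hQN'c, add_zero]
      simp at h1
    · rintro ⟨N', hN'meas, hsub, hnull⟩
      refine ⟨N', hN'meas, hsub, ?_⟩
      rintro Q ⟨hQprob, ⟨P', hP', hQac⟩, hQint⟩
      exact hQac (hnull P' hP')
  · -- the duality
    set S := {y : EReal | ∃ x : ℝ, y = (x : EReal) ∧ LeQS Ps X (fun _ => x)} with hS
    set T := {y : EReal | ∃ P : Measure Ω,
        (IsProbabilityMeasure P ∧ (∃ P' ∈ Ps, P ≪ P') ∧ Integrable X P) ∧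
        y = ((∫ ω, X ω ∂P : ℝ) : EReal)} with hT
    have hST : sSup T ≤ sInf S := by
      apply le_sInf
      rintro y ⟨x, rfl, N', hN'meas, hsub, hnull⟩
      apply sSup_le
      rintro t ⟨Q, ⟨hQprob, ⟨P', hP', hQac⟩, hQint⟩, rfl⟩
      haveI := hQprob
      have hQN' : Q N' = 0 := hQac (hnull P' hP')
      have hae : ∀ᵐ ω ∂Q, X ω ≤ x := by
        rw [ae_iff]
        exact measure_mono_null hsub hQN'
      have : ∫ ω, X ω ∂Q ≤ ∫ _, x ∂Q := integral_mono_ae hQint (integrable_const x) hae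
      rw [integral_const] at this
      simp only [probReal_univ, one_smul] at this
      exact EReal.coe_le_coe_iff.mpr this
    refine le_antisymm ?_ hST
    by_contra hlt
    push_neg at hlt
    obtain ⟨x, hx1, hx2⟩ := EReal.exists_between_coe_real hlt
    -- `x` is not a quasi-sure bound
    have hxnot : ¬ LeQS Ps X (fun _ => x) := by
      intro hle
      have : sInf S ≤ (x : EReal) := sInf_le ⟨x, rfl, hle⟩
      exact absurd (this.trans_lt hx2) (lt_irrefl _)
    have hAmeas : MeasurableSet {ω | ¬ X ω ≤ x} := by
      have : {ω | ¬ X ω ≤ x} = {ω | x < X ω} := by ext ω; simp [not_le]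
      rw [this]
      exact measurableSet_lt measurable_const hX
    have hex : ∃ P ∈ Ps, P {ω | ¬ X ω ≤ x} ≠ 0 := by
      by_contra hall
      push_neg at hall
      refine hxnot ⟨{ω | ¬ X ω ≤ x}, hAmeas, subset_rfl, fun P hP => ?_⟩
      have h := hall P hP
      have heq : {ω | ¬ X ω ≤ x} = {ω | x < X ω} := by ext ω; simp [not_le]
      rw [heq]
      exact h
    obtain ⟨Q, hQmem, hQAc⟩ := hkey _ hAmeas hex
    haveI : IsProbabilityMeasure Q := hQmem.1
    have haeA : ∀ᵐ ω ∂Q, x ≤ X ω := by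
      rw [ae_iff]
      refine measure_mono_null (fun ω hω => ?_) hQAc
      simp only [Set.mem_setOf_eq, not_le] at hω
      simp only [Set.mem_compl_iff, Set.mem_setOf_eq, not_not]
      linarith
    have hxle : x ≤ ∫ ω, X ω ∂Q := by
      have : ∫ _, x ∂Q ≤ ∫ ω, X ω ∂Q :=
        integral_mono_ae (integrable_const x) hQmem.2.2 haeA
      rwa [integral_const, probReal_univ, one_smul] at this
    have hmem : ((∫ ω, X ω ∂Q : ℝ) : EReal) ∈ T := ⟨Q, hQmem, rfl⟩
    have : (x : EReal) ≤ sSup T :=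
      le_trans (EReal.coe_le_coe_iff.mpr hxle) (le_sSup hmem)
    exact absurd (this.trans_lt hx1) (lt_irrefl _)


end Paper
end

section
/- Assume 𝒞 is Fatou closed. Let P be a probability measure on (Ω, ℱ) with P(N) = 0 for every 𝒫-polar set N ∈ ℱ, let λ ≥ 0 and K ≥ λ, and set 𝒞_λ^K := {X ∈ 𝒞_λ : ‖X‖_W ≤ K}. Then j_P(𝒞_λ^K) is closed in the topology σ(L^∞(P), L^1(P)). -/
open MeasureTheory Filter Topology

namespace Paper

variable {Ω : Type*} [MeasurableSpace Ω]

/-- `𝒞_λ^K`: the elements of `𝒞_λ` with `‖·‖_W ≤ K` (equivalently, `K` is a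
quasi-sure bound). -/
def coneCLamK (Ps : Set (Measure Ω)) (W : Ω → ℝ) (Kc : Set (Ω → ℝ)) (l K : ℝ) :
    Set (Ω → ℝ) :=
  {X ∈ coneCLam Ps W Kc l | K ∈ Bounds Ps W X}

end Paper

namespace Paper

variable {Ω : Type*} [MeasurableSpace Ω]

lemma Polar.mono' {Ps : Set (Measure Ω)} {A B : Set Ω} (hB : Polar Ps B) (h : A ⊆ B) :
    Polar Ps A :=
  let ⟨N, hN, hBN, h0⟩ := hB; ⟨N, hN, h.trans hBN, h0⟩

lemma polar_empty (Ps : Set (Measure Ω)) : Polar Ps (∅ : Set Ω) :=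
  ⟨∅, MeasurableSet.empty, subset_rfl, fun _ _ => measure_empty⟩

lemma polar_union {Ps : Set (Measure Ω)} {A B : Set Ω} (hA : Polar Ps A) (hB : Polar Ps B) :
    Polar Ps (A ∪ B) := by
  obtain ⟨NA, hNA, hsA, h0A⟩ := hA
  obtain ⟨NB, hNB, hsB, h0B⟩ := hB
  exact ⟨NA ∪ NB, hNA.union hNB, Set.union_subset_union hsA hsB,
    fun P hP => measure_union_null (h0A P hP) (h0B P hP)⟩

lemma polar_iUnion {Ps : Set (Measure Ω)} {A : ℕ → Set Ω} (h : ∀ n, Polar Ps (A n)) :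
    Polar Ps (⋃ n, A n) := by
  choose N hNm hsub h0 using h
  refine ⟨⋃ n, N n, MeasurableSet.iUnion hNm, Set.iUnion_mono hsub, fun P hP => ?_⟩
  rw [measure_iUnion_null_iff]
  exact fun n => h0 n P hP

lemma ae_nmem_of_polar {Ps : Set (Measure Ω)} {P : Measure Ω}
    (hPpolar : ∀ N : Set Ω, MeasurableSet N → Polar Ps N → P N = 0) {S : Set Ω}
    (hS : Polar Ps S) : ∀ᵐ ω ∂P, ω ∉ S := by
  obtain ⟨N, hNm, hsub, h0⟩ := hS
  have hN : P N = 0 := hPpolar N hNm ⟨N, hNm, subset_rfl, h0⟩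
  have hS0 : P S = 0 := measure_mono_null hsub hN
  rw [ae_iff]
  have : {ω | ¬ ω ∉ S} = S := by ext ω; simp
  rw [this]; exact hS0

lemma abs_max_le_of {K l w a : ℝ} (hw : 0 ≤ w) (hl : 0 ≤ l) (hlK : l ≤ K) (ha : |a| ≤ K * w) :
    |max a (-l * w)| ≤ K * w := by
  rw [abs_le] at ha ⊢
  refine ⟨?_, max_le ha.2 (by nlinarith)⟩
  have h1 : -(K * w) ≤ -l * w := by nlinarith
  exact h1.trans (le_max_right _ _)

end Paper

namespace Paper

/-- **Lemma (`lem:p_closure`).** Assume `𝒞` is Fatou closed. For a probability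
`P` vanishing on all `𝒫`-polar sets and `K ≥ λ ≥ 0`, the image `j_P(𝒞_λ^K)` is
closed in the weak topology `σ(L^∞(P), L^1(P))`: any measurable `P`-essentially
bounded `Y` all of whose basic weak neighbourhoods meet `j_P(𝒞_λ^K)` lies in
`j_P(𝒞_λ^K)`. -/
theorem jP_CLamK_weakly_closed {Ω : Type*} [MeasurableSpace Ω]
    (Ps : Set (Measure Ω)) (hPsne : Ps.Nonempty)
    (hPsprob : ∀ P ∈ Ps, IsProbabilityMeasure P)
    (W : Ω → ℝ) (hWmeas : Measurable W) (hW1 : ∀ ω, 1 ≤ W ω)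
    (Kc : Set (Ω → ℝ)) (hKc : IsConvexCone Kc)
    (hFatou : FatouClosed Ps W (coneC Ps W Kc))
    (P : Measure Ω) (hP : IsProbabilityMeasure P)
    (hPpolar : ∀ N : Set Ω, MeasurableSet N → Polar Ps N → P N = 0)
    (l K : ℝ) (hl : 0 ≤ l) (hK : l ≤ K) :
    ∀ Y : Ω → ℝ, Measurable Y → (∃ c : ℝ, ∀ᵐ ω ∂P, |Y ω| ≤ c) →
      (∀ ε : ℝ, 0 < ε → ∀ (k : ℕ) (g : Fin k → Ω → ℝ), (∀ i, Integrable (g i) P) →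
        ∃ X ∈ coneCLamK Ps W Kc l K,
          ∀ i, |∫ ω, (X ω / W ω - Y ω) * g i ω ∂P| < ε) →
      ∃ X ∈ coneCLamK Ps W Kc l K, Y =ᵐ[P] fun ω => X ω / W ω := by
  classical
  haveI := hP
  intro Y hYmeas hYbdd hcl
  obtain ⟨c, hc⟩ := hYbdd
  have hK0 : 0 ≤ K := hl.trans hK
  have hWpos : ∀ ω, 0 < W ω := fun ω => lt_of_lt_of_le one_pos (hW1 ω)
  have hWne : ∀ ω, W ω ≠ 0 := fun ω => (hWpos ω).ne'
  set CK := coneCLamK Ps W Kc l K with hCKdef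
  -- convexity of CK
  have hcombo : ∀ X₁ ∈ CK, ∀ X₂ ∈ CK, ∀ a b : ℝ, 0 ≤ a → 0 ≤ b → a + b = 1 →
      (fun ω => a * X₁ ω + b * X₂ ω) ∈ CK := by
    rintro X₁ ⟨⟨⟨hm₁, -⟩, k₁, ⟨hk₁Kc, hk₁l⟩, hX₁k⟩, -, hB₁⟩
      X₂ ⟨⟨⟨hm₂, -⟩, k₂, ⟨hk₂Kc, hk₂l⟩, hX₂k⟩, -, hB₂⟩ a b ha hb hab
    have hBc : Polar Ps {ω | K * W ω < |a * X₁ ω + b * X₂ ω|} := by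
      refine (polar_union hB₁ hB₂).mono' ?_
      intro ω hω
      by_contra hno
      simp only [Set.mem_union, Set.mem_setOf_eq, not_or, not_lt] at hno
      apply absurd hω
      simp only [Set.mem_setOf_eq, not_lt]
      have h1 := abs_add_le (a * X₁ ω) (b * X₂ ω)
      rw [abs_mul, abs_mul, abs_of_nonneg ha, abs_of_nonneg hb] at h1
      nlinarith [hno.1, hno.2, abs_nonneg (X₁ ω), abs_nonneg (X₂ ω)]
    refine ⟨⟨⟨(hm₁.const_mul a).add (hm₂.const_mul b), ⟨K, hK0, hBc⟩⟩,
      (fun ω => a * k₁ ω + b * k₂ ω),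
      ⟨hKc.2.2.2 _ (hKc.2.2.1 k₁ hk₁Kc a ha) _ (hKc.2.2.1 k₂ hk₂Kc b hb), ?_⟩, ?_⟩,
      hK0, hBc⟩
    · refine (polar_union hk₁l hk₂l).mono' ?_
      intro ω hω
      by_contra hno
      simp only [Set.mem_union, Set.mem_setOf_eq, not_or, not_not] at hno
      simp only [Set.mem_setOf_eq] at hω
      have e : a * (-l * W ω) + b * (-l * W ω) = -l * W ω := by
        rw [← add_mul, hab, one_mul]
      exact hω (by linarith [mul_le_mul_of_nonneg_left hno.1 ha,
        mul_le_mul_of_nonneg_left hno.2 hb])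
    · refine (polar_union hX₁k hX₂k).mono' ?_
      intro ω hω
      by_contra hno
      simp only [Set.mem_union, Set.mem_setOf_eq, not_or, not_not] at hno
      simp only [Set.mem_setOf_eq] at hω
      exact hω (add_le_add (mul_le_mul_of_nonneg_left hno.1 ha)
        (mul_le_mul_of_nonneg_left hno.2 hb))
  -- ratio bound and Memℒp
  have hratio : ∀ X ∈ CK, ∀ᵐ ω ∂P, |X ω / W ω| ≤ K := by
    intro X hX
    filter_upwards [ae_nmem_of_polar hPpolar hX.2.2] with ω hω
    have hb : |X ω| ≤ K * W ω := not_lt.mp hω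
    rw [abs_div, abs_of_pos (hWpos ω), div_le_iff₀ (hWpos ω)]
    linarith
  have hmemLp : ∀ X ∈ CK, MemLp (fun ω => X ω / W ω - Y ω) 2 P := by
    intro X hX
    refine MemLp.of_bound (((hX.1.1.1.div hWmeas).sub hYmeas).aestronglyMeasurable) (K + c) ?_
    filter_upwards [hratio X hX, hc] with ω h1 h2
    have h3 := abs_sub (X ω / W ω) (Y ω)
    simp only [Real.norm_eq_abs]
    linarith
  -- nonemptiness
  obtain ⟨X₀, hX₀, -⟩ := hcl 1 one_pos 0 (fun i => i.elim0) (fun i => i.elim0)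
  -- the image set in L²
  set B : Set (Lp ℝ 2 P) :=
    {w | ∃ X ∈ CK, (w : Ω → ℝ) =ᵐ[P] fun ω => X ω / W ω - Y ω} with hBdef
  have hBne : B.Nonempty := ⟨(hmemLp X₀ hX₀).toLp, X₀, hX₀, MemLp.coeFn_toLp _⟩
  have hBconv : Convex ℝ B := by
    rintro w₁ ⟨X₁, hX₁, hw₁⟩ w₂ ⟨X₂, hX₂, hw₂⟩ a b ha hb hab
    refine ⟨fun ω => a * X₁ ω + b * X₂ ω, hcombo X₁ hX₁ X₂ hX₂ a b ha hb hab, ?_⟩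
    have hb' : b = 1 - a := by linarith
    subst hb'
    filter_upwards [Lp.coeFn_add (a • w₁) ((1 - a) • w₂), Lp.coeFn_smul a w₁,
      Lp.coeFn_smul (1 - a) w₂, hw₁, hw₂] with ω e1 e2 e3 e4 e5
    simp only [Pi.add_apply] at e1
    rw [e1, e2, e3, Pi.smul_apply, Pi.smul_apply, smul_eq_mul, smul_eq_mul, e4, e5]
    show a * (X₁ ω / W ω - Y ω) + (1 - a) * (X₂ ω / W ω - Y ω)
        = (a * X₁ ω + (1 - a) * X₂ ω) / W ω - Y ω
    rw [add_div, mul_div_assoc, mul_div_assoc]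
    ring
  -- 0 is in the closure of B
  have h0cl : (0 : Lp ℝ 2 P) ∈ closure B := by
    by_contra h0
    have hSconv : Convex ℝ (closure B) := hBconv.closure
    have hScomp : IsComplete (closure B) := isClosed_closure.isComplete
    obtain ⟨v, hvS, hmin⟩ :=
      exists_norm_eq_iInf_of_complete_convex hBne.closure hScomp hSconv 0
    have key : ∀ w ∈ closure B, (inner ℝ (0 - v) (w - v)) ≤ 0 :=
      (norm_eq_iInf_iff_real_inner_le_zero hSconv hvS).1 hmin
    have hvne : v ≠ 0 := fun h => h0 (h ▸ hvS)
    have hvpos : 0 < ‖v‖ ^ 2 := pow_pos (norm_pos_iff.mpr hvne) 2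
    have hvint : Integrable (v : Ω → ℝ) P := (Lp.memLp v).integrable one_le_two
    obtain ⟨X, hXCK, hsmall⟩ := hcl (‖v‖ ^ 2) hvpos 1 (fun _ => (v : Ω → ℝ)) (fun _ => hvint)
    have hsm := hsmall 0
    have hwB : (hmemLp X hXCK).toLp ∈ B := ⟨X, hXCK, MemLp.coeFn_toLp _⟩
    have hinner : (inner ℝ v ((hmemLp X hXCK).toLp))
        = ∫ ω, (X ω / W ω - Y ω) * (v : Ω → ℝ) ω ∂P := by
      rw [MeasureTheory.L2.inner_def]
      refine integral_congr_ae ?_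
      filter_upwards [MemLp.coeFn_toLp (hmemLp X hXCK)] with ω hω
      rw [hω]
      simp only [RCLike.inner_apply, conj_trivial]
    have hge : ‖v‖ ^ 2 ≤ (inner ℝ v ((hmemLp X hXCK).toLp)) := by
      have h1 := key _ (subset_closure hwB)
      rw [zero_sub, inner_neg_left, inner_sub_right, real_inner_self_eq_norm_sq] at h1
      linarith
    have hlt : (inner ℝ v ((hmemLp X hXCK).toLp)) < ‖v‖ ^ 2 :=
      lt_of_le_of_lt (hinner ▸ le_abs_self _) hsm
    linarith
  -- extract a sequence converging in L², then a.e. along a subsequence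
  have hseq : ∀ n : ℕ, ∃ w ∈ B, dist (0 : Lp ℝ 2 P) w < 1 / (n + 1) :=
    fun n => Metric.mem_closure_iff.mp h0cl _ (by positivity)
  choose u huB hudist using hseq
  choose Xs hXsCK hXsae using huB
  have htnorm : Tendsto (fun n => ‖u n‖) atTop (𝓝 0) := by
    refine squeeze_zero (g := fun n : ℕ => 1 / ((n : ℝ) + 1)) (fun n => norm_nonneg _) (fun n => ?_) ?_
    · exact le_of_lt (by simpa [dist_zero_left] using hudist n)
    · exact tendsto_one_div_add_atTop_nhds_zero_nat
  have hteLp : Tendsto (fun n => eLpNorm ((u n : Ω → ℝ)) 2 P) atTop (𝓝 0) := by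
    rw [← ENNReal.tendsto_toReal_iff (fun n => Lp.eLpNorm_ne_top (u n)) ENNReal.zero_ne_top]
    simpa [Lp.norm_def] using htnorm
  have htD : Tendsto
      (fun n => eLpNorm ((fun ω => Xs n ω / W ω - Y ω) - (0 : Ω → ℝ)) 2 P) atTop (𝓝 0) := by
    have heq : (fun n => eLpNorm ((fun ω => Xs n ω / W ω - Y ω) - (0 : Ω → ℝ)) 2 P)
        = fun n => eLpNorm ((u n : Ω → ℝ)) 2 P := by
      funext n
      rw [sub_zero]
      exact (eLpNorm_congr_ae (hXsae n)).symm
    rw [heq]; exact hteLp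
  have htim : TendstoInMeasure P (fun n ω => Xs n ω / W ω - Y ω) atTop (0 : Ω → ℝ) :=
    tendstoInMeasure_of_tendsto_eLpNorm (p := 2) (by norm_num)
      (fun n => (((hXsCK n).1.1.1.div hWmeas).sub hYmeas).aestronglyMeasurable)
      aestronglyMeasurable_const htD
  obtain ⟨ns, -, haeT⟩ := htim.exists_seq_tendsto_ae
  have haeT' : ∀ᵐ ω ∂P, Tendsto (fun i => Xs (ns i) ω / W ω) atTop (𝓝 (Y ω)) := by
    filter_upwards [haeT] with ω hω
    have h2 := hω.add_const (Y ω)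
    simp only [Pi.zero_apply, zero_add, sub_add_cancel] at h2
    exact h2
  obtain ⟨N, hNsub, hNmeas, hPN⟩ := exists_measurable_superset_of_null (ae_iff.mp haeT')
  set Xf : ℕ → Ω → ℝ := fun i => Xs (ns i) with hXfdef
  have hXfCK : ∀ i, Xf i ∈ CK := fun i => hXsCK (ns i)
  have hconv : ∀ ω, ω ∉ N → Tendsto (fun i => Xf i ω / W ω) atTop (𝓝 (Y ω)) := by
    intro ω hω
    by_contra hno
    exact hω (hNsub hno)
  have hXfm : ∀ i, Measurable (Xf i) := fun i => (hXfCK i).1.1.1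
  have hXfB : ∀ i, Polar Ps {ω | K * W ω < |Xf i ω|} := fun i => (hXfCK i).2.2
  choose kk hkkmem hkkle using fun i => (hXfCK i).1.2
  -- the auxiliary sequence and its limit
  set Zp : ℕ → Ω → ℝ :=
    fun n ω => max (if ω ∈ N then -K * W ω else Xf n ω) (-l * W ω) with hZpdef
  set Zlim : Ω → ℝ :=
    fun ω => max (if ω ∈ N then -K * W ω else Y ω * W ω) (-l * W ω) with hZlimdef
  set Xfin : Ω → ℝ := fun ω => if ω ∈ N then -K * W ω else Y ω * W ω with hXfindef
  have hIteB : ∀ ω, ω ∉ (⋃ i, {ω | K * W ω < |Xf i ω|}) →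
      |(if ω ∈ N then -K * W ω else Y ω * W ω)| ≤ K * W ω := by
    intro ω hω
    simp only [Set.mem_iUnion, Set.mem_setOf_eq, not_exists, not_lt] at hω
    by_cases hN : ω ∈ N
    · rw [if_pos hN, neg_mul, abs_neg, abs_of_nonneg (mul_nonneg hK0 (hWpos ω).le)]
    · rw [if_neg hN]
      have hten : Tendsto (fun i => Xf i ω) atTop (𝓝 (Y ω * W ω)) := by
        have h0 := (hconv ω hN).mul_const (W ω)
        have h2 : (fun i => Xf i ω / W ω * W ω) = fun i => Xf i ω :=
          funext fun i => div_mul_cancel₀ _ (hWne ω)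
        rwa [h2] at h0
      exact le_of_tendsto hten.abs (Eventually.of_forall fun i => hω i)
  have hZpBounds : ∀ n, K ∈ Bounds Ps W (Zp n) := by
    intro n
    refine ⟨hK0, (hXfB n).mono' ?_⟩
    intro ω hω
    by_contra hno
    simp only [Set.mem_setOf_eq, not_lt] at hno
    apply absurd hω
    simp only [Set.mem_setOf_eq, not_lt, hZpdef]
    refine abs_max_le_of (hWpos ω).le hl hK ?_
    by_cases hN : ω ∈ N
    · rw [if_pos hN, neg_mul, abs_neg, abs_of_nonneg (mul_nonneg hK0 (hWpos ω).le)]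
    · rw [if_neg hN]; exact hno
  have hZpC : ∀ n, Zp n ∈ coneC Ps W Kc := by
    intro n
    refine ⟨⟨?_, ⟨K, hZpBounds n⟩⟩, kk n, (hkkmem n).1, ?_⟩
    · simp only [hZpdef]
      exact Measurable.max
        (Measurable.ite hNmeas (hWmeas.const_mul (-K)) (hXfm n))
        (hWmeas.const_mul (-l))
    · refine (polar_union (hkkle n) (hkkmem n).2).mono' ?_
      intro ω hω
      by_contra hno
      simp only [Set.mem_union, Set.mem_setOf_eq, not_or, not_not] at hno
      simp only [Set.mem_setOf_eq] at hω
      apply hω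
      simp only [hZpdef]
      refine max_le ?_ hno.2
      by_cases hN : ω ∈ N
      · rw [if_pos hN]
        have : -K * W ω ≤ -l * W ω := by nlinarith [hWpos ω]
        exact this.trans hno.2
      · rw [if_neg hN]; exact hno.1
  have hZlimLW : MemLW Ps W Zlim := by
    constructor
    · simp only [hZlimdef]
      exact Measurable.max
        (Measurable.ite hNmeas (hWmeas.const_mul (-K)) (hYmeas.mul hWmeas))
        (hWmeas.const_mul (-l))
    · refine ⟨K, hK0, (polar_iUnion hXfB).mono' ?_⟩
      intro ω hω
      by_contra hno
      apply absurd hω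
      simp only [Set.mem_setOf_eq, not_lt, hZlimdef]
      exact abs_max_le_of (hWpos ω).le hl hK (hIteB ω hno)
  have hconvAll : ∀ ω, Tendsto (fun n => Zp n ω) atTop (𝓝 (Zlim ω)) := by
    intro ω
    by_cases hN : ω ∈ N
    · simp only [hZpdef, hZlimdef, if_pos hN]
      exact tendsto_const_nhds
    · simp only [hZpdef, hZlimdef, if_neg hN]
      have hten : Tendsto (fun n => Xf n ω) atTop (𝓝 (Y ω * W ω)) := by
        have h0 := (hconv ω hN).mul_const (W ω)
        have h2 : (fun i => Xf i ω / W ω * W ω) = fun i => Xf i ω :=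
          funext fun i => div_mul_cancel₀ _ (hWne ω)
        rwa [h2] at h0
      exact hten.max tendsto_const_nhds
  have hZlimC : Zlim ∈ coneC Ps W Kc :=
    hFatou Zp hZpC ⟨K, hZpBounds⟩ Zlim hZlimLW
      ((polar_empty Ps).mono' fun ω hω => absurd (hconvAll ω) hω)
  obtain ⟨-, kinf, hkinfKc, hZlimk⟩ := hZlimC
  have hkinfl : LeQS Ps (fun ω => -l * W ω) kinf := by
    refine hZlimk.mono' ?_
    intro ω hω
    simp only [Set.mem_setOf_eq] at hω ⊢
    intro hZ
    apply hω
    refine le_trans ?_ hZ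
    simp only [hZlimdef]
    exact le_max_right _ _
  have hXfinle : LeQS Ps Xfin kinf := by
    refine hZlimk.mono' ?_
    intro ω hω
    simp only [Set.mem_setOf_eq] at hω ⊢
    intro hZ
    apply hω
    refine le_trans ?_ hZ
    simp only [hXfindef, hZlimdef]
    exact le_max_left _ _
  have hXfinB : Polar Ps {ω | K * W ω < |Xfin ω|} := by
    refine (polar_iUnion hXfB).mono' ?_
    intro ω hω
    by_contra hno
    apply absurd hω
    simp only [Set.mem_setOf_eq, not_lt, hXfindef]
    exact hIteB ω hno
  refine ⟨Xfin, ⟨⟨⟨?_, ⟨K, hK0, hXfinB⟩⟩, kinf, ⟨hkinfKc, hkinfl⟩, hXfinle⟩, hK0, hXfinB⟩, ?_⟩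
  · simp only [hXfindef]
    exact Measurable.ite hNmeas (hWmeas.const_mul (-K)) (hYmeas.mul hWmeas)
  · have hNae : ∀ᵐ ω ∂P, ω ∉ N := by
      rw [ae_iff]
      have hEq : {ω | ¬ ω ∉ N} = N := by ext ω; simp
      rw [hEq]; exact hPN
    filter_upwards [hNae] with ω hω
    simp only [hXfindef, if_neg hω]
    rw [mul_div_assoc, div_self (hWne ω), mul_one]

end Paper
end
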